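/- If G is a bipartite graph on n vertices with permanental polynomial per(xI − A(G)) = ∑_{k=0}^n b_k x^{n−k}, then b_{2k+1} = 0 for all k ≥ 0 and b_{2k} ≥ 0 for all k ≥ 0. -/

import Mathlib

open Polynomial Matrix Finset

private lemma supp_even {V : Type*} [Fintype V] [DecidableEq V] (G : SimpleGraph V)
    (hbip : G.Colorable 2) (σ : Equiv.Perm V)
    (h : ∀ i ∈ σ.support, G.Adj (σ i) i) : Even σ.support.card := by
  classical
  obtain ⟨col⟩ := hbip
  set S0 := σ.support.filter (fun i => col i = 0) with hS0
  set S1 := σ.support.filter (fun i => col i ≠ 0) with hS1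
  have hmem : ∀ i ∈ σ.support, σ i ∈ σ.support ∧ col (σ i) ≠ col i := by
    intro i hi
    exact ⟨Equiv.Perm.apply_mem_support.mpr hi, (col.valid (h i hi))⟩
  have h01 : S0.card ≤ S1.card := by
    apply Finset.card_le_card_of_injOn σ
    · intro i hi
      simp only [hS0, hS1, Finset.mem_coe, Finset.mem_filter] at hi ⊢
      obtain ⟨hs, hc⟩ := hi
      obtain ⟨hs', hc'⟩ := hmem i hs
      exact ⟨hs', by rw [hc] at hc'; exact hc'⟩
    · exact fun a _ b _ hab => σ.injective hab
  have h10 : S1.card ≤ S0.card := by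
    apply Finset.card_le_card_of_injOn σ
    · intro i hi
      simp only [hS0, hS1, Finset.mem_coe, Finset.mem_filter] at hi ⊢
      obtain ⟨hs, hc⟩ := hi
      obtain ⟨hs', hc'⟩ := hmem i hs
      refine ⟨hs', ?_⟩
      omega
    · exact fun a _ b _ hab => σ.injective hab
  have hsplit : S0.card + S1.card = σ.support.card :=
    Finset.card_filter_add_card_filter_not (fun i => col i = 0)
  have : σ.support.card = 2 * S0.card := by omega
  exact ⟨S0.card, by omega⟩

theorem stmt_6 {V : Type*} [Fintype V] [DecidableEq V] (G : SimpleGraph V)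
    [DecidableRel G.Adj] (hbip : G.Colorable 2) :
    (∀ k : ℕ, 2 * k + 1 ≤ Fintype.card V →
        (Matrix.permanent (G.adjMatrix ℤ).charmatrix).coeff (Fintype.card V - (2 * k + 1)) = 0)
    ∧ (∀ k : ℕ, 2 * k ≤ Fintype.card V →
        0 ≤ (Matrix.permanent (G.adjMatrix ℤ).charmatrix).coeff (Fintype.card V - 2 * k)) := by
  classical
  set n := Fintype.card V with hn
  set A := G.adjMatrix ℤ with hA
  -- the term of a permutation
  have hterm : ∀ σ : Equiv.Perm V,
      ∏ i, A.charmatrix (σ i) i =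
      C ((-1) ^ σ.support.card * ∏ i ∈ σ.support, A (σ i) i) * X ^ (n - σ.support.card) := by
    intro σ
    rw [← Finset.prod_compl_mul_prod σ.support]
    have h1 : ∏ i ∈ σ.supportᶜ, A.charmatrix (σ i) i = X ^ (n - σ.support.card) := by
      rw [Finset.prod_congr rfl (g := fun _ => (X : ℤ[X])) ?_]
      · rw [Finset.prod_const, Finset.card_compl, hn]
      · intro i hi
        have hfix : σ i = i := by
          simpa [Equiv.Perm.mem_support, not_not] using (Finset.mem_compl.mp hi)
        rw [hfix, charmatrix_apply_eq]
        simp [hA]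
    have h2 : ∏ i ∈ σ.support, A.charmatrix (σ i) i =
        C ((-1) ^ σ.support.card * ∏ i ∈ σ.support, A (σ i) i) := by
      rw [Finset.prod_congr rfl (g := fun i => -C (A (σ i) i)) ?_]
      · rw [show (fun i => -C (A (σ i) i)) = (fun i => (-1 : ℤ[X]) * C (A (σ i) i)) from funext (fun i => (neg_eq_neg_one_mul _)), Finset.prod_mul_distrib, Finset.prod_const]
        simp [_root_.map_mul, map_prod]
      · intro i hi
        have : σ i ≠ i := Equiv.Perm.mem_support.mp hi
        rw [charmatrix_apply_ne _ _ _ this]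
    rw [h1, h2, mul_comm]
  -- coefficient of each term
  have hcoeff : ∀ (σ : Equiv.Perm V) (d : ℕ),
      (∏ i, A.charmatrix (σ i) i).coeff d =
      if n - σ.support.card = d then (-1) ^ σ.support.card * ∏ i ∈ σ.support, A (σ i) i
      else 0 := by
    intro σ d
    rw [hterm σ, coeff_C_mul, coeff_X_pow]
    split <;> simp_all [eq_comm]
  -- key dichotomy about the constants
  have hkey : ∀ σ : Equiv.Perm V,
      ((-1 : ℤ) ^ σ.support.card * ∏ i ∈ σ.support, A (σ i) i = 0) ∨
      (Even σ.support.card ∧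
        (-1 : ℤ) ^ σ.support.card * ∏ i ∈ σ.support, A (σ i) i = 1) := by
    intro σ
    by_cases hz : ∏ i ∈ σ.support, A (σ i) i = 0
    · left; rw [hz, mul_zero]
    · right
      have hadj : ∀ i ∈ σ.support, G.Adj (σ i) i := by
        intro i hi
        by_contra hna
        exact hz (Finset.prod_eq_zero hi (by simp [hA, hna]))
      have hev := supp_even G hbip σ hadj
      refine ⟨hev, ?_⟩
      have h1 : ∏ i ∈ σ.support, A (σ i) i = 1 :=
        Finset.prod_eq_one (fun i hi => by simp [hA, hadj i hi])
      rw [h1, hev.neg_one_pow, mul_one]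
  rw [Matrix.permanent]
  constructor
  · intro k hk
    rw [Polynomial.finset_sum_coeff]
    apply Finset.sum_eq_zero
    intro σ _
    rw [hcoeff]
    rcases hkey σ with h0 | ⟨hev, _⟩
    · simp [h0]
    · have hle : σ.support.card ≤ n := Finset.card_le_univ _
      have : n - σ.support.card ≠ n - (2 * k + 1) := by
        intro heq
        have : σ.support.card = 2 * k + 1 := by omega
        rw [this] at hev
        rcases hev with ⟨m, hm⟩
        omega
      simp [this]
  · intro k hk
    rw [Polynomial.finset_sum_coeff]
    apply Finset.sum_nonneg
    intro σ _
    rw [hcoeff]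
    rcases hkey σ with h0 | ⟨_, h1⟩
    · rw [h0]
      split <;> simp
    · rw [h1]
      split <;> norm_num
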